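/- Let G be an acyclic directed mixed graph and let H_i ≠ H_j be two distinct heads of G with tails T_i = tail_G(H_i) and T_j = tail_G(H_j). Then there is no set A with both H_i ⊆ A ⊆ H_i ∪ T_i and H_j ⊆ A ⊆ H_j ∪ T_j; that is, the collections of effects {A : H_i ⊆ A ⊆ H_i ∪ T_i} and {A : H_j ⊆ A ⊆ H_j ∪ T_j} are disjoint. -/
import Mathlib


open Finset

open scoped Classical

variable {V : Type} [Fintype V] [DecidableEq V]

/-- An acyclic directed mixed graph (ADMG): directed edges `dir` and a symmetric
irreflexive set of bidirected edges `bi`, with no directed cycle. -/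
structure ADMG (V : Type) [Fintype V] [DecidableEq V] where
  dir : V → V → Prop
  bi : V → V → Prop
  bi_symm : ∀ {v w}, bi v w → bi w v
  bi_irrefl : ∀ v, ¬ bi v v
  acyclic : ∀ v, ¬ Relation.TransGen dir v v

namespace ADMG

/-- Ancestors of (members of) `A`: vertices `w` with `w = a` or a directed path `w → ⋯ → a`
for some `a ∈ A`. -/
noncomputable def anc (G : ADMG V) (A : Finset V) : Finset V :=
  univ.filter fun w => ∃ a ∈ A, Relation.ReflTransGen G.dir w a

/-- Descendants of (members of) `A`. -/
noncomputable def dec (G : ADMG V) (A : Finset V) : Finset V :=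
  univ.filter fun w => ∃ a ∈ A, Relation.ReflTransGen G.dir a w

/-- Parents of (members of) `A`. -/
noncomputable def pa (G : ADMG V) (A : Finset V) : Finset V :=
  univ.filter fun w => ∃ a ∈ A, G.dir w a

/-- `barren_G(U)`: members of `U` with no non-trivial descendant in `U`. -/
noncomputable def barren (G : ADMG V) (U : Finset V) : Finset V :=
  U.filter fun v => G.dec {v} ∩ U = {v}

/-- `U` is barren if `barren_G(U) = U`. -/
def IsBarren (G : ADMG V) (U : Finset V) : Prop := G.barren U = U

/-- One bidirected step inside the induced subgraph `G_S`. -/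
def biStep (G : ADMG V) (S : Finset V) (u w : V) : Prop :=
  u ∈ S ∧ w ∈ S ∧ G.bi u w

/-- District of (members of) `A` in the induced subgraph `G_S`: vertices joined to a member
of `A` by a (possibly empty) bidirected path within `S`. -/
noncomputable def disIn (G : ADMG V) (S A : Finset V) : Finset V :=
  univ.filter fun w => ∃ a ∈ A, a ∈ S ∧ w ∈ S ∧ Relation.ReflTransGen (G.biStep S) a w

/-- District in the whole graph. -/
noncomputable def dis (G : ADMG V) (A : Finset V) : Finset V := G.disIn univ A

/-- A head: a nonempty barren set connected by bidirected paths in `G_{an_G(H)}`. -/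
def IsHead (G : ADMG V) (H : Finset V) : Prop :=
  H.Nonempty ∧ G.IsBarren H ∧
    ∀ a ∈ H, ∀ b ∈ H, Relation.ReflTransGen (G.biStep (G.anc H)) a b

/-- The tail of a head: `tail_G(H) = pa_G(D) ∪ (D ∖ H)` where `D = dis_{G_{an(H)}}(H)`. -/
noncomputable def tail (G : ADMG V) (H : Finset V) : Finset V :=
  G.pa (G.disIn (G.anc H) H) ∪ (G.disIn (G.anc H) H \ H)

end ADMG

/-- `Gbar` is a head-preserving completion of `G`: a complete supergraph (on the same
vertices) in which every head of `G` is still a head. -/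
def IsHPC (G Gbar : ADMG V) : Prop :=
  (∀ v w, G.dir v w → Gbar.dir v w) ∧
  (∀ v w, G.bi v w → Gbar.bi v w) ∧
  (∀ v w : V, v ≠ w → Gbar.dir v w ∨ Gbar.dir w v ∨ Gbar.bi v w) ∧
  (∀ H : Finset V, G.IsHead H → Gbar.IsHead H)

/-- Type of an edge on a path, read from left to right:
`u → w`, `u ← w`, or `u ↔ w`. -/
inductive EdgeType : Type
  | toRight
  | toLeft
  | biE

/-- The edge of the given type is present in `G` between `u` (left) and `w` (right). -/
def edgeOK (G : ADMG V) : EdgeType → V → V → Prop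
  | .toRight, u, w => G.dir u w
  | .toLeft,  u, w => G.dir w u
  | .biE,     u, w => G.bi u w

/-- The edge has an arrowhead at its right endpoint. -/
def arrowAtRight : EdgeType → Prop
  | .toRight => True
  | .toLeft  => False
  | .biE     => True

/-- The edge has an arrowhead at its left endpoint. -/
def arrowAtLeft : EdgeType → Prop
  | .toRight => False
  | .toLeft  => True
  | .biE     => True

/-- A path from `x` to `y` in the mixed graph `G`: distinct vertices `f 0, …, f n`
joined by edges of the recorded types. -/
structure GPath (G : ADMG V) (x y : V) where
  n : ℕ
  f : Fin (n + 1) → V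
  inj : Function.Injective f
  first : f 0 = x
  last : f (Fin.last n) = y
  e : Fin n → EdgeType
  ok : ∀ i : Fin n, edgeOK G (e i) (f i.castSucc) (f i.succ)

/-- The interior vertex `f (i+1)` is a collider on the path: both incident edges
have an arrowhead at it. -/
def GPath.colliderAt {G : ADMG V} {x y : V} (w : GPath G x y)
    (i : ℕ) (h : i + 1 < w.n) : Prop :=
  arrowAtRight (w.e ⟨i, by omega⟩) ∧ arrowAtLeft (w.e ⟨i + 1, h⟩)

/-- The path is blocked by `C`: some interior non-collider is in `C`, or some interior
collider is outside `an_G(C)`. -/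
def GPath.Blocked {G : ADMG V} {x y : V} (w : GPath G x y) (C : Finset V) : Prop :=
  ∃ (i : ℕ) (h : i + 1 < w.n),
    (¬ w.colliderAt i h ∧ w.f ⟨i + 1, by omega⟩ ∈ C) ∨
    (w.colliderAt i h ∧ w.f ⟨i + 1, by omega⟩ ∉ G.anc C)

/-- m-separation of `A` and `B` given `C` in `G`. -/
def MSep (G : ADMG V) (A B C : Finset V) : Prop :=
  ∀ a ∈ A, ∀ b ∈ B, ∀ w : GPath G a b, w.Blocked C

/-- If `v` is in a barren set `H` and `h ∈ H` is a descendant of `v`, then `h = v`. -/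
lemma barren_desc {G : ADMG V} {H : Finset V} (hb : G.IsBarren H)
    {v h : V} (hv : v ∈ H) (hh : h ∈ H)
    (hd : Relation.ReflTransGen G.dir v h) : h = v := by
  have hv' : v ∈ G.barren H := hb.symm ▸ hv
  have hcond := (Finset.mem_filter.mp hv').2
  have : h ∈ G.dec {v} ∩ H := by
    refine Finset.mem_inter.mpr ⟨?_, hh⟩
    simp only [ADMG.dec, Finset.mem_filter, Finset.mem_univ, true_and]
    exact ⟨v, Finset.mem_singleton_self v, hd⟩
  rw [hcond] at this
  exact Finset.mem_singleton.mp this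

/-- Every element of the tail of a head has a nontrivial directed path to the head. -/
lemma tail_transGen {G : ADMG V} {H : Finset V} (hH : G.IsHead H)
    {t : V} (ht : t ∈ G.tail H) : ∃ h ∈ H, Relation.TransGen G.dir t h := by
  rcases Finset.mem_union.mp ht with hp | hd
  · -- t is a parent of some d in D ⊆ anc H
    simp only [ADMG.pa, Finset.mem_filter, Finset.mem_univ, true_and] at hp
    obtain ⟨d, hdD, hdir⟩ := hp
    simp only [ADMG.disIn, Finset.mem_filter, Finset.mem_univ, true_and] at hdD
    obtain ⟨a, _, _, hdanc, _⟩ := hdD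
    simp only [ADMG.anc, Finset.mem_filter, Finset.mem_univ, true_and] at hdanc
    obtain ⟨h, hhH, hdh⟩ := hdanc
    exact ⟨h, hhH, Relation.TransGen.head' hdir hdh⟩
  · -- t ∈ D \ H with D ⊆ anc H
    obtain ⟨htD, htH⟩ := Finset.mem_sdiff.mp hd
    simp only [ADMG.disIn, Finset.mem_filter, Finset.mem_univ, true_and] at htD
    obtain ⟨a, _, _, htanc, _⟩ := htD
    simp only [ADMG.anc, Finset.mem_filter, Finset.mem_univ, true_and] at htanc
    obtain ⟨h, hhH, hth⟩ := htanc
    rcases (Relation.reflTransGen_iff_eq_or_transGen.mp hth) with rfl | htg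
    · exact absurd hhH htH
    · exact ⟨h, hhH, htg⟩

/-- A head is recovered from any `A` with `H ⊆ A ⊆ H ∪ tail H` as the barren subset. -/
lemma head_eq_barren {G : ADMG V} {H A : Finset V} (hH : G.IsHead H)
    (h1 : H ⊆ A) (h2 : A ⊆ H ∪ G.tail H) : G.barren A = H := by
  have hb := hH.2.1
  apply Finset.ext
  intro v
  simp only [ADMG.barren, Finset.mem_filter]
  constructor
  · rintro ⟨hvA, _⟩
    rcases Finset.mem_union.mp (h2 hvA) with hvH | hvt
    · exact hvH
    · -- v ∈ tail H has a strict descendant h ∈ H ⊆ A, contradiction with barren cond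
      obtain ⟨h, hhH, htg⟩ := tail_transGen hH hvt
      exfalso
      have hmem : h ∈ G.dec {v} ∩ A := by
        refine Finset.mem_inter.mpr ⟨?_, h1 hhH⟩
        simp only [ADMG.dec, Finset.mem_filter, Finset.mem_univ, true_and]
        exact ⟨v, Finset.mem_singleton_self v, htg.to_reflTransGen⟩
      rw [‹G.dec {v} ∩ A = {v}›] at hmem
      have : h = v := Finset.mem_singleton.mp hmem
      exact G.acyclic v (this ▸ htg)
  · intro hvH
    refine ⟨h1 hvH, ?_⟩
    apply Finset.Subset.antisymm
    · intro w hw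
      obtain ⟨hwdec, hwA⟩ := Finset.mem_inter.mp hw
      simp only [ADMG.dec, Finset.mem_filter, Finset.mem_univ, true_and] at hwdec
      obtain ⟨a, hav, hvw⟩ := hwdec
      rw [Finset.mem_singleton.mp hav] at hvw
      rcases Finset.mem_union.mp (h2 hwA) with hwH | hwt
      · exact Finset.mem_singleton.mpr (barren_desc hb hvH hwH hvw)
      · exfalso
        obtain ⟨h, hhH, htg⟩ := tail_transGen hH hwt
        have : Relation.TransGen G.dir v h := Relation.TransGen.trans_right hvw htg
        have := barren_desc hb hvH hhH this.to_reflTransGen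
        exact G.acyclic v (this ▸ ‹Relation.TransGen G.dir v h›)
    · intro w hw
      rw [Finset.mem_singleton.mp hw]
      refine Finset.mem_inter.mpr ⟨?_, h1 hvH⟩
      simp only [ADMG.dec, Finset.mem_filter, Finset.mem_univ, true_and]
      exact ⟨v, Finset.mem_singleton_self v, Relation.ReflTransGen.refl⟩

/-- for distinct heads `H_i ≠ H_j`, no set `A` satisfies both
`H_i ⊆ A ⊆ H_i ∪ T_i` and `H_j ⊆ A ⊆ H_j ∪ T_j`; the effect collections are disjoint. -/
theorem effects_disjoint (G : ADMG V) (Hi Hj : Finset V)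
    (hi : G.IsHead Hi) (hj : G.IsHead Hj) (hne : Hi ≠ Hj) :
    ¬ ∃ A : Finset V,
        Hi ⊆ A ∧ A ⊆ Hi ∪ G.tail Hi ∧ Hj ⊆ A ∧ A ⊆ Hj ∪ G.tail Hj := by
  rintro ⟨A, hi1, hi2, hj1, hj2⟩
  exact hne ((head_eq_barren hi hi1 hi2).symm.trans (head_eq_barren hj hj1 hj2))
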